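/- Let $\pi: \mathrm{Bl}_0 \mathbb{C}^v \to \mathbb{C}^v$ be the blowup of the origin, $U \subseteq \mathbb{C}$ open, and $w \in \mathrm{Sym}^m(U)$. Then postcomposition with $\pi$ defines a bijection between: (a) continuous maps $U \to \mathrm{Bl}_0 \mathbb{C}^v$ intersecting the exceptional divisor holomorphically to order exactly $w$, and (b) continuous maps $U \to \mathbb{C}^v$ intersecting the origin holomorphically to order exactly $w$. The inverse sends $(f_1, \dots, f_v)$ with $f_i = \rho_w \tilde{f}_i$ to $(f_1, \dots, f_v) \times [\tilde{f}_1 : \cdots : \tilde{f}_v]$. -/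

import Mathlib

open scoped LinearAlgebra.Projectivization

noncomputable section

instance projTop (v : ℕ) : TopologicalSpace (ℙ ℂ (Fin v → ℂ)) :=
  inferInstanceAs (TopologicalSpace (Quotient (projectivizationSetoid ℂ (Fin v → ℂ))))

/-- The blowup of `ℂ^v` at the origin, as the incidence variety in
`ℂ^v × ℙ(ℂ^v)`. -/
def Blowup (v : ℕ) : Type :=
  {p : (Fin v → ℂ) × ℙ ℂ (Fin v → ℂ) // p.1 ∈ p.2.submodule}

instance (v : ℕ) : TopologicalSpace (Blowup v) := instTopologicalSpaceSubtype

/-- The exceptional divisor of the blowup. -/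
def ExcDiv (v : ℕ) : Set (Blowup v) := {p | p.1.1 = 0}

variable (v : ℕ) (U : Set ℂ) (ρ : ℂ → ℂ) (R : Set ℂ)

/-- A continuous map `f : U → ℂ^v` intersects the origin holomorphically to order
exactly `w`, where `w` has monic polynomial `ρ` and support `R`: each coordinate factors
continuously as `ρ · f̃ᵢ`, at each point of `R` some `f̃ᵢ` is nonzero, and
`f⁻¹(0) = R`. -/
def BaseExact (f : U → Fin v → ℂ) : Prop :=
  Continuous f ∧
    (∃ ft : U → Fin v → ℂ, Continuous ft ∧
      (∀ (z : U) (i : Fin v), f z i = ρ (z : ℂ) * ft z i) ∧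
      ∀ z : U, (z : ℂ) ∈ R → ft z ≠ 0) ∧
    ∀ z : U, f z = 0 ↔ (z : ℂ) ∈ R

/-- A continuous map `F : U → Bl₀ ℂ^v` intersects the exceptional divisor
holomorphically to order exactly `w`: `F⁻¹(E) = R`, and near every point there is a
standard chart (index `i` where the homogeneous coordinate is nonvanishing, witnessed by
a continuous local lift `ℓf` normalized by `ℓf z i = 1`) in which the chart coordinate
cutting out `E`, namely `z ↦ (F z).1 i`, factors as `ρ ·(unit)`. -/
def BlExact (F : U → Blowup v) : Prop :=
  Continuous F ∧ (∀ z : U, F z ∈ ExcDiv v ↔ (z : ℂ) ∈ R) ∧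
    ∀ z0 : U, ∃ (i : Fin v) (V : Set U), IsOpen V ∧ z0 ∈ V ∧
      (∃ ℓf : U → Fin v → ℂ, ContinuousOn ℓf V ∧ (∀ z ∈ V, ℓf z i = 1) ∧
        ∀ z ∈ V, ∃ hnz : ℓf z ≠ 0, (F z).1.2 = Projectivization.mk ℂ (ℓf z) hnz) ∧
      (∃ gl : U → ℂ, ContinuousOn gl V ∧
        (∀ z ∈ V, (F z).1.1 i = ρ (z : ℂ) * gl z) ∧
        ∀ z ∈ V, (z : ℂ) ∈ R → gl z ≠ 0)

open Filter Topology

lemma aux_punctured_neBot {U : Set ℂ} (hU : IsOpen U) (z : U) : Filter.NeBot (𝓝[≠] z) := by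
  by_contra h
  rw [not_neBot, ← isOpen_singleton_iff_punctured_nhds] at h
  have : IsOpen (Subtype.val '' ({z} : Set U)) := hU.isOpenMap_subtype_val _ h
  rw [Set.image_singleton] at this
  rw [isOpen_singleton_iff_punctured_nhds] at this
  exact (NormedField.nhdsNE_neBot (z : ℂ)).ne this

lemma aux_dense_eq {U : Set ℂ} (hU : IsOpen U) {Rf : Set U} (hRf : Rf.Finite)
    {E : Type*} [TopologicalSpace E] [T2Space E] {g h : U → E} {V : Set U}
    (hV : IsOpen V) (hg : ContinuousOn g V) (hh : ContinuousOn h V)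
    (heq : ∀ z ∈ V, z ∉ Rf → g z = h z) : ∀ z ∈ V, g z = h z := by
  intro z0 hz0
  by_cases hz0R : z0 ∈ Rf
  · set S : Set U := V \ Rf with hS
    have hO : IsOpen (V ∩ (Rf \ {z0})ᶜ) :=
      hV.inter (((hRf.subset Set.diff_subset).isClosed).isOpen_compl)
    have hOz : (V ∩ (Rf \ {z0})ᶜ) ∈ 𝓝 z0 :=
      hO.mem_nhds ⟨hz0, by simp⟩
    have hsub : {z0}ᶜ ∩ (V ∩ (Rf \ {z0})ᶜ) ⊆ S := by
      rintro z ⟨hz1, hz2, hz3⟩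
      refine ⟨hz2, fun hzR => hz3 ⟨hzR, hz1⟩⟩
    have hne : Filter.NeBot (𝓝[S] z0) := by
      have h1 : 𝓝[{z0}ᶜ ∩ (V ∩ (Rf \ {z0})ᶜ)] z0 = 𝓝[≠] z0 :=
        nhdsWithin_inter_of_mem' (mem_nhdsWithin_of_mem_nhds hOz)
      have := aux_punctured_neBot hU z0
      rw [← h1] at this
      exact this.mono (nhdsWithin_mono _ hsub)
    have t1 : Tendsto g (𝓝[S] z0) (𝓝 (g z0)) :=
      ((hg z0 hz0).mono Set.diff_subset).tendsto
    have t2 : Tendsto h (𝓝[S] z0) (𝓝 (h z0)) :=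
      ((hh z0 hz0).mono Set.diff_subset).tendsto
    have t3 : Tendsto g (𝓝[S] z0) (𝓝 (h z0)) := by
      refine t2.congr' ?_
      filter_upwards [self_mem_nhdsWithin] with z hz
      exact (heq z hz.1 hz.2).symm
    exact tendsto_nhds_unique t1 t3
  · exact heq z0 hz0 hz0R

lemma aux_claimA {v : ℕ} {U : Set ℂ} {ρ : ℂ → ℂ} (F : U → Blowup v) (i : Fin v)
    (V : Set U) (ℓf : U → Fin v → ℂ) (gl : U → ℂ)
    (hℓ1 : ∀ z ∈ V, ℓf z i = 1)
    (hmk : ∀ z ∈ V, ∃ hnz : ℓf z ≠ 0, (F z).1.2 = Projectivization.mk ℂ (ℓf z) hnz)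
    (hglρ : ∀ z ∈ V, (F z).1.1 i = ρ (z : ℂ) * gl z) :
    ∀ z ∈ V, (F z).1.1 = ρ (z : ℂ) • (gl z • ℓf z) := by
  intro z hz
  obtain ⟨hnz, hmkz⟩ := hmk z hz
  have hmem : (F z).1.1 ∈ (F z).1.2.submodule := (F z).2
  rw [hmkz, Projectivization.submodule_mk, Submodule.mem_span_singleton] at hmem
  obtain ⟨a, ha⟩ := hmem
  have hai : a = (F z).1.1 i := by
    have h := congrFun ha i
    simpa [hℓ1 z hz] using h
  rw [smul_smul, ← hglρ z hz, ← hai, ha]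

/-- Postcomposition with the blowdown map `π : Bl₀ ℂ^v → ℂ^v` is a bijection between
continuous maps `U → Bl₀ ℂ^v` intersecting the exceptional divisor holomorphically to
order exactly `w` and continuous maps `U → ℂ^v` intersecting the origin holomorphically
to order exactly `w`. -/
theorem stmt14 (hv : 1 ≤ v) (hU : IsOpen U) (m : ℕ) (c : Multiset ℂ)
    (hcard : Multiset.card c = m) (hmem : ∀ x ∈ c, x ∈ U)
    (hρ : ρ = fun z => (c.map fun a => z - a).prod)
    (hR : R = {z : ℂ | z ∈ c}) :
    Set.BijOn (fun (F : U → Blowup v) (z : U) => (F z).1.1)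
      {F | BlExact v U ρ R F} {f | BaseExact v U ρ R f} := by
  have hρ0 : ∀ z : ℂ, ρ z = 0 ↔ z ∈ R := by
    intro z
    subst hρ hR
    simp only [Multiset.prod_eq_zero_iff, Multiset.mem_map, Set.mem_setOf_eq, sub_eq_zero]
    constructor
    · rintro ⟨a, ha, rfl⟩; exact ha
    · intro h; exact ⟨z, h, rfl⟩
  have hRfin : (Subtype.val ⁻¹' R : Set U).Finite := by
    have : R.Finite := by
      subst hR
      exact Set.Finite.ofFinset c.toFinset (by simp [Multiset.mem_toFinset])
    exact this.preimage (Set.injOn_of_injective Subtype.val_injective)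
  refine ⟨?_, ?_, ?_⟩
  · -- MapsTo
    intro F hF
    obtain ⟨hFc, hFE, hFch⟩ := hF
    choose i V hVo hzV hch1 hch2 using hFch
    choose ℓf hℓc hℓ1 hℓmk using hch1
    choose gl hglc hglρ hglR using hch2
    have hA : ∀ z0 : U, ∀ z ∈ V z0,
        (F z).1.1 = ρ (z : ℂ) • (gl z0 z • ℓf z0 z) := fun z0 =>
      aux_claimA F (i z0) (V z0) (ℓf z0) (gl z0) (hℓ1 z0) (hℓmk z0) (hglρ z0)
    have hB : ∀ z0 z1 : U, ∀ z ∈ V z0 ∩ V z1,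
        gl z0 z • ℓf z0 z = gl z1 z • ℓf z1 z := by
      intro z0 z1
      refine aux_dense_eq hU hRfin ((hVo z0).inter (hVo z1))
        (((hglc z0).mono Set.inter_subset_left).smul ((hℓc z0).mono Set.inter_subset_left))
        (((hglc z1).mono Set.inter_subset_right).smul ((hℓc z1).mono Set.inter_subset_right))
        ?_
      intro z hz hzR
      have hρne : ρ (z : ℂ) ≠ 0 := fun h => hzR ((hρ0 z).mp h)
      apply smul_right_injective (Fin v → ℂ) hρne
      show ρ (z : ℂ) • _ = ρ (z : ℂ) • _
      rw [← hA z0 z hz.1, ← hA z1 z hz.2]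
    set ft : U → Fin v → ℂ := fun z => gl z z • ℓf z z with hftdef
    have hftV : ∀ z0 : U, ∀ z ∈ V z0, ft z = gl z0 z • ℓf z0 z :=
      fun z0 z hz => hB z z0 z ⟨hzV z, hz⟩
    refine ⟨(continuous_subtype_val.comp hFc).fst, ⟨ft, ?_, ?_, ?_⟩, fun z => hFE z⟩
    · rw [continuous_iff_continuousAt]
      intro z0
      have hca : ContinuousAt (fun z => gl z0 z • ℓf z0 z) z0 :=
        ((hglc z0).smul (hℓc z0)).continuousAt ((hVo z0).mem_nhds (hzV z0))
      exact hca.congr (Filter.eventuallyEq_of_mem ((hVo z0).mem_nhds (hzV z0))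
        fun z hz => (hftV z0 z hz).symm)
    · intro z j
      simpa [hftdef] using congrFun (hA z z (hzV z)) j
    · intro z hzR h0
      have h := congrFun h0 (i z)
      rw [hftdef] at h
      simp only [Pi.smul_apply, smul_eq_mul, hℓ1 z z (hzV z), mul_one, Pi.zero_apply] at h
      exact hglR z z (hzV z) hzR h
  · -- InjOn
    intro F hF G hG heq
    have key : ∀ (F : U → Blowup v), BlExact v U ρ R F → ∀ z0 : U,
        ∀ hnz : (F z0).1.1 ≠ 0, (F z0).1.2 = Projectivization.mk ℂ ((F z0).1.1) hnz := by
      intro F hF z0 hnzf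
      obtain ⟨i, V, hVo, hz0V, ⟨ℓf, _, hℓ1, hℓmk⟩, _⟩ := hF.2.2 z0
      obtain ⟨hnzℓ, hmkz⟩ := hℓmk z0 hz0V
      have hmem : (F z0).1.1 ∈ (F z0).1.2.submodule := (F z0).2
      rw [hmkz, Projectivization.submodule_mk, Submodule.mem_span_singleton] at hmem
      obtain ⟨a, ha⟩ := hmem
      rw [hmkz]
      exact ((Projectivization.mk_eq_mk_iff' ℂ _ _ hnzf hnzℓ).mpr ⟨a, ha⟩).symm
    funext z0
    have h1 : (F z0).1.1 = (G z0).1.1 := congrFun heq z0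
    by_cases hz0R : (z0 : ℂ) ∈ R
    · -- use charts and density
      obtain ⟨i, V, hVo, hz0V, ⟨ℓf, hℓc, hℓ1, hℓmk⟩, ⟨gl, hglc, hglρ, hglR⟩⟩ := hF.2.2 z0
      obtain ⟨i', V', hVo', hz0V', ⟨ℓg, hℓc', hℓ1', hℓmk'⟩, ⟨gl', hglc', hglρ', hglR'⟩⟩ :=
        hG.2.2 z0
      have hAF := aux_claimA F i V ℓf gl hℓ1 hℓmk hglρ
      have hAG := aux_claimA G i' V' ℓg gl' hℓ1' hℓmk' hglρ'
      have hpq : gl z0 • ℓf z0 = gl' z0 • ℓg z0 := by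
        refine aux_dense_eq hU hRfin (hVo.inter hVo')
          ((hglc.mono Set.inter_subset_left).smul (hℓc.mono Set.inter_subset_left))
          ((hglc'.mono Set.inter_subset_right).smul (hℓc'.mono Set.inter_subset_right))
          ?_ z0 ⟨hz0V, hz0V'⟩
        intro z hz hzR
        have hρne : ρ (z : ℂ) ≠ 0 := fun h => hzR ((hρ0 z).mp h)
        apply smul_right_injective (Fin v → ℂ) hρne
        show ρ (z : ℂ) • (gl z • ℓf z) = ρ (z : ℂ) • (gl' z • ℓg z)
        rw [← hAF z hz.1, ← hAG z hz.2]
        exact congrFun heq z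
      obtain ⟨hnzf, hmkf⟩ := hℓmk z0 hz0V
      obtain ⟨hnzg, hmkg⟩ := hℓmk' z0 hz0V'
      have hglne : gl z0 ≠ 0 := hglR z0 hz0V hz0R
      have hglne' : gl' z0 ≠ 0 := hglR' z0 hz0V' hz0R
      have hmk2 : Projectivization.mk ℂ (ℓf z0) hnzf = Projectivization.mk ℂ (ℓg z0) hnzg := by
        refine (Projectivization.mk_eq_mk_iff' ℂ _ _ hnzf hnzg).mpr
          ⟨(gl z0)⁻¹ * gl' z0, ?_⟩
        rw [mul_smul, ← hpq, inv_smul_smul₀ hglne]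
      apply Subtype.ext
      apply Prod.ext h1
      rw [hmkf, hmkg, hmk2]
    · have hnzf : (F z0).1.1 ≠ 0 := fun h => hz0R ((hF.2.1 z0).mp h)
      have hnzg : (G z0).1.1 ≠ 0 := fun h => hz0R ((hG.2.1 z0).mp h)
      apply Subtype.ext
      apply Prod.ext h1
      rw [key F hF z0 hnzf, key G hG z0 hnzg]
      exact (Projectivization.mk_eq_mk_iff' ℂ _ _ hnzf hnzg).mpr ⟨1, by rw [one_smul, h1]⟩
  · -- SurjOn
    intro f hf
    obtain ⟨hfc, ⟨ft, hftc, hft, hftR⟩, hf0⟩ := hf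
    have hnz : ∀ z : U, ft z ≠ 0 := by
      intro z
      by_cases hzR : (z : ℂ) ∈ R
      · exact hftR z hzR
      · intro h0
        apply hzR
        apply (hf0 z).mp
        funext j
        rw [hft z j, h0]
        simp
    refine ⟨fun z =>
      ⟨(f z, Projectivization.mk ℂ (ft z) (hnz z)),
        Submodule.mem_span_singleton.mpr ⟨ρ (z : ℂ), by
          funext j
          simp [hft z j]⟩⟩, ⟨?_, ?_, ?_⟩, rfl⟩
    · -- continuity
      refine Continuous.subtype_mk (hfc.prodMk ?_) _
      have h2 : Continuous fun z : U => (⟨ft z, hnz z⟩ : {x : Fin v → ℂ // x ≠ 0}) :=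
        hftc.subtype_mk _
      exact continuous_quotient_mk'.comp h2
    · intro z
      exact hf0 z
    · intro z0
      obtain ⟨i, hi⟩ := Function.ne_iff.mp (hnz z0)
      refine ⟨i, {z : U | ft z i ≠ 0}, ?_, hi, ?_, ?_⟩
      · exact isOpen_compl_singleton.preimage ((continuous_apply i).comp hftc)
      · refine ⟨fun z => (ft z i)⁻¹ • ft z, ?_, ?_, ?_⟩
        · exact ContinuousOn.smul
            (((continuous_apply i).comp hftc).continuousOn.inv₀ fun z hz => hz)
            hftc.continuousOn
        · intro z hz
          simp only [Pi.smul_apply, smul_eq_mul]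
          exact inv_mul_cancel₀ hz
        · intro z hz
          refine ⟨smul_ne_zero (inv_ne_zero hz) (hnz z), ?_⟩
          exact (Projectivization.mk_eq_mk_iff' ℂ _ _ (hnz z)
            (smul_ne_zero (inv_ne_zero hz) (hnz z))).mpr
            ⟨ft z i, smul_inv_smul₀ hz (ft z)⟩
      · exact ⟨fun z => ft z i, ((continuous_apply i).comp hftc).continuousOn,
          fun z _ => hft z i, fun z hz _ => hz⟩

end
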